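/- Under the positivity assumptions on S, the derivative of H at X = 0 is H'[0](ξ) = -A·ξ·Uᵀ, where U ∈ ℝ^{B×M'} is the matrix with entries U[b,m] = (S·M)[b,m] / (Σ_e S[b,e]), i.e. U = (S·M) ⊘ (S·1_{E×M'}). -/

import Mathlib

open Matrix

attribute [local instance] Matrix.normedAddCommGroup Matrix.normedSpace

/-- Entrywise exponential of a matrix. -/
noncomputable def mexp {m n : ℕ} (A : Matrix (Fin m) (Fin n) ℝ) : Matrix (Fin m) (Fin n) ℝ :=
  Matrix.of fun i j => Real.exp (A i j)

/-- The derivative of the logarithmic forward map `H(X) = log(F(X) ⊘ F(0))`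
at `X = 0` is `ξ ↦ -A·ξ·Uᵀ`, where `U[b,m] = (S·M)[b,m] / Σ_e S[b,e]`. -/
theorem msct_H_fderiv_at_zero {Nx Ny E B M' : ℕ}
    (A : Matrix (Fin Ny) (Fin Nx) ℝ) (M : Matrix (Fin E) (Fin M') ℝ)
    (S : Matrix (Fin B) (Fin E) ℝ)
    (hS_nonneg : ∀ b e, 0 ≤ S b e)
    (hS_pos : ∀ b, 0 < ∑ e, S b e)
    (F : Matrix (Fin Nx) (Fin M') ℝ → Matrix (Fin Ny) (Fin B) ℝ)
    (hF : ∀ X, F X = mexp (-(A * X * Mᵀ)) * Sᵀ)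
    (H : Matrix (Fin Nx) (Fin M') ℝ → Matrix (Fin Ny) (Fin B) ℝ)
    (hH : ∀ X i b, H X i b = Real.log (F X i b / F 0 i b))
    (U : Matrix (Fin B) (Fin M') ℝ)
    (hU : ∀ b m, U b m = (S * M) b m / ∑ e, S b e) :
    DifferentiableAt ℝ H 0 ∧ ∀ ξ, fderiv ℝ H 0 ξ = -(A * ξ * Uᵀ) := by
  classical
  -- entrywise linear maps
  let G : Fin Ny → Fin E → (Matrix (Fin Nx) (Fin M') ℝ →L[ℝ] ℝ) := fun i e =>
    LinearMap.toContinuousLinearMap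
      { toFun := fun ξ => (-(A * ξ * Mᵀ)) i e
        map_add' := by intro x y; simp [Matrix.mul_add, Matrix.add_mul]; ring
        map_smul' := by intro r x; simp [Matrix.mul_smul, Matrix.smul_mul] }
  let L : Matrix (Fin Nx) (Fin M') ℝ →L[ℝ] Matrix (Fin Ny) (Fin B) ℝ :=
    LinearMap.toContinuousLinearMap
      { toFun := fun ξ => -(A * ξ * Uᵀ)
        map_add' := by intro x y; simp [Matrix.mul_add, Matrix.add_mul]; abel
        map_smul' := by intro r x; simp [Matrix.mul_smul, Matrix.smul_mul] }
  have hFe : ∀ X i b, F X i b = ∑ e, Real.exp ((-(A * X * Mᵀ)) i e) * S b e := by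
    intro X i b
    rw [hF]
    simp [mexp, Matrix.mul_apply, Matrix.transpose_apply]
  have hF0 : ∀ i b, F 0 i b = ∑ e, S b e := by
    intro i b; rw [hFe]; simp
  have hpos : ∀ (X : Matrix (Fin Nx) (Fin M') ℝ) (i : Fin Ny) (b : Fin B), 0 < ∑ e, Real.exp ((-(A * X * Mᵀ)) i e) * S b e := by
    intro X i b
    obtain ⟨e, he⟩ : ∃ e, 0 < S b e := by
      by_contra h
      push_neg at h
      have : ∑ e, S b e ≤ 0 := Finset.sum_nonpos fun e _ => h e
      exact absurd (hS_pos b) (not_lt.2 this)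
    exact Finset.sum_pos' (fun e' _ => mul_nonneg (Real.exp_pos _).le (hS_nonneg b e'))
      ⟨e, Finset.mem_univ e, mul_pos (Real.exp_pos _) he⟩
  have hHe : ∀ X i b, H X i b
      = Real.log (∑ e, Real.exp ((-(A * X * Mᵀ)) i e) * S b e) - Real.log (∑ e, S b e) := by
    intro X i b
    rw [hH, hF0, hFe, Real.log_div (hpos X i b).ne' (hS_pos b).ne']
  have hcomp : ∀ i b, HasFDerivAt (fun X => H X i b)
      ((ContinuousLinearMap.proj b).comp ((ContinuousLinearMap.proj i).comp L)) 0 := by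
    intro i b
    have h1 : HasFDerivAt (fun X => ∑ e, Real.exp ((G i e) X) * S b e)
        (∑ e, S b e • (Real.exp ((G i e) 0) • G i e)) 0 :=
      HasFDerivAt.fun_sum fun e _ => ((G i e).hasFDerivAt.exp.mul_const (S b e))
    have h2 := (h1.log (hpos 0 i b).ne').sub_const (Real.log (∑ e, S b e))
    have hfun : (fun X => Real.log (∑ e, Real.exp ((G i e) X) * S b e)
        - Real.log (∑ e, S b e)) = fun X => H X i b := by
      funext X
      rw [hHe]
      rfl
    rw [hfun] at h2
    suffices e : ((ContinuousLinearMap.proj b).comp ((ContinuousLinearMap.proj i).comp L) :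
        Matrix (Fin Nx) (Fin M') ℝ →L[ℝ] ℝ)
        = (∑ e, Real.exp ((G i e) 0) * S b e)⁻¹ • ∑ e, S b e • Real.exp ((G i e) 0) • G i e by
      exact h2.congr_fderiv e.symm
    ext ξ
    simp only [ContinuousLinearMap.comp_apply, ContinuousLinearMap.proj_apply,
      ContinuousLinearMap.smul_apply, ContinuousLinearMap.sum_apply, smul_eq_mul,
      LinearMap.coe_toContinuousLinearMap', LinearMap.coe_mk, AddHom.coe_mk, L, G]
    have h0 : ∀ e : Fin E, (-(A * (0 : Matrix (Fin Nx) (Fin M') ℝ) * Mᵀ)) i e = 0 := by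
      intro e; simp
    simp only [h0, Real.exp_zero, one_mul]
    show (-(A * ξ * Uᵀ)) i b = _
    set P := A * ξ with hP
    have hPU : (-(P * Uᵀ)) i b = -∑ m, P i m * U b m := by
      simp [Matrix.mul_apply, Matrix.transpose_apply]
    have hPM : ∀ e, (-(P * Mᵀ)) i e = -∑ m, P i m * M e m := by
      intro e; simp [Matrix.mul_apply, Matrix.transpose_apply]
    rw [hPU]
    simp only [hPM, mul_neg, Finset.sum_neg_distrib, neg_inj]
    have key : ∑ e, S b e * ∑ m, P i m * M e m = ∑ m, P i m * ∑ e, S b e * M e m := by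
      simp only [Finset.mul_sum]
      rw [Finset.sum_comm]
      exact Finset.sum_congr rfl fun m _ => Finset.sum_congr rfl fun e _ => by ring
    rw [key, Finset.mul_sum]
    refine Finset.sum_congr rfl fun m _ => ?_
    rw [hU]
    have : (S * M) b m = ∑ e, S b e * M e m := by simp [Matrix.mul_apply]
    rw [this]
    field_simp
  refine ⟨?_, ?_⟩
  · exact (hasFDerivAt_pi'.2 fun i => hasFDerivAt_pi'.2 fun b => hcomp i b).differentiableAt
  · intro ξ
    have hd : HasFDerivAt H L 0 := hasFDerivAt_pi'.2 fun i => hasFDerivAt_pi'.2 fun b => hcomp i b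
    rw [hd.fderiv]
    rfl
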